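/- Let M ≥ 1 be a natural number and 0 < α ≤ β real numbers. Set γ* = (√β − √α)/(√β + √α), ε₀ = 4/(√β + √α)², θ₀ = (γ*)², and define the parameters ε₁ = … = ε_M = 0, θ₁ = −θ₀, θ₂ = … = θ_M = 0. Then for every λ with α ≤ λ ≤ β, every complex root of p(z, λ) = z^{M+1} + (ε₀λ − 1 − θ₀)z^M + Σ_{m=1}^{M}(ε_mλ − θ_m)z^{M−m} has modulus at most γ*. -/

import Mathlib

/-- With the one-tap optimal parameters embedded in the M-tap scheme
(ε₁ = … = ε_M = 0, θ₁ = −θ₀, θ₂ = … = θ_M = 0), for every λ ∈ [α, β] every complex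
root of p(z, λ) has modulus at most γ* = (√β − √α)/(√β + √α). -/
theorem stmt_6 (M : ℕ) (hM : 1 ≤ M) (α β : ℝ) (hα : 0 < α) (hαβ : α ≤ β)
    (γstar : ℝ) (hγ : γstar = (Real.sqrt β - Real.sqrt α) / (Real.sqrt β + Real.sqrt α))
    (ε θ : ℕ → ℝ)
    (hε0 : ε 0 = 4 / (Real.sqrt β + Real.sqrt α) ^ 2)
    (hεm : ∀ m, 1 ≤ m → m ≤ M → ε m = 0)
    (hθ0 : θ 0 = γstar ^ 2)
    (hθ1 : θ 1 = -θ 0)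
    (hθm : ∀ m, 2 ≤ m → m ≤ M → θ m = 0) :
    ∀ lam : ℝ, α ≤ lam → lam ≤ β →
      ∀ z : ℂ,
        z ^ (M + 1) + ((ε 0 * lam - 1 - θ 0 : ℝ) : ℂ) * z ^ M +
          ∑ m ∈ Finset.Icc 1 M, ((ε m * lam - θ m : ℝ) : ℂ) * z ^ (M - m) = 0 →
        ‖z‖ ≤ γstar := by
  intro lam hlam1 hlam2 z hz
  set a := Real.sqrt α with haa
  set c := Real.sqrt β with hcc
  have ha0 : 0 < a := Real.sqrt_pos.mpr hα
  have hc0 : 0 < c := Real.sqrt_pos.mpr (lt_of_lt_of_le hα hαβ)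
  have hac : a ≤ c := Real.sqrt_le_sqrt hαβ
  have ha2 : a ^ 2 = α := Real.sq_sqrt hα.le
  have hc2 : c ^ 2 = β := Real.sq_sqrt (hα.le.trans hαβ)
  have hγ0 : 0 ≤ γstar := by
    rw [hγ]; exact div_nonneg (by linarith) (by positivity)
  have hθ0g : θ 0 = γstar ^ 2 := hθ0
  set b : ℝ := ε 0 * lam - 1 - θ 0 with hb
  have hD : (0:ℝ) < (c + a) ^ 2 := by positivity
  have hb' : b = (4 * lam - 2 * a ^ 2 - 2 * c ^ 2) / (c + a) ^ 2 := by
    rw [hb, hε0, hθ0, hγ]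
    field_simp
    ring
  have hθ0' : θ 0 = (c - a) ^ 2 / (c + a) ^ 2 := by
    rw [hθ0, hγ, div_pow]
  have key : (2 * lam - a ^ 2 - c ^ 2) ^ 2 ≤ (c ^ 2 - a ^ 2) ^ 2 := by
    nlinarith [mul_nonneg (sub_nonneg.2 hlam1) (sub_nonneg.2 hlam2), ha2, hc2]
  have hdisc : b ^ 2 ≤ 4 * θ 0 := by
    rw [hb', hθ0', div_pow, ← mul_div_assoc, div_le_div_iff₀ (by positivity) hD]
    nlinarith [mul_le_mul_of_nonneg_right key hD.le]
  -- simplify the sum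
  have hsum : ∑ m ∈ Finset.Icc 1 M, ((ε m * lam - θ m : ℝ) : ℂ) * z ^ (M - m)
      = ((θ 0 : ℝ) : ℂ) * z ^ (M - 1) := by
    rw [Finset.sum_eq_single 1]
    · rw [hεm 1 le_rfl hM, hθ1]; push_cast; ring
    · intro m hm hm1
      simp only [Finset.mem_Icc] at hm
      rw [hεm m hm.1 hm.2, hθm m (by omega) hm.2]
      norm_num
    · intro h
      exact absurd (Finset.mem_Icc.mpr ⟨le_rfl, hM⟩) h
  rw [hsum] at hz
  obtain ⟨k, rfl⟩ : ∃ k, M = k + 1 := ⟨M - 1, by omega⟩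
  have hz' : z ^ k * (z ^ 2 + ((b : ℝ) : ℂ) * z + ((θ 0 : ℝ) : ℂ)) = 0 := by
    rw [← hz]
    simp only [Nat.add_sub_cancel]
    ring
  rcases mul_eq_zero.mp hz' with h | h
  · have hz0 : z = 0 := by
      by_contra hne
      exact (pow_ne_zero k hne) h
    simp [hz0, hγ0]
  · -- quadratic case
    have hre := congrArg Complex.re h
    have him := congrArg Complex.im h
    simp only [Complex.add_re, Complex.add_im, Complex.mul_re, Complex.mul_im,
      Complex.ofReal_re, Complex.ofReal_im, pow_two, Complex.zero_re, Complex.zero_im] at hre him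
    set x := z.re with hx
    set y := z.im with hy
    clear hz hsum hz' h key hb' hθ0' hγ hε0 hθ1 hεm hθm hθ0 haa hcc ha2 hc2 ha0 hc0 hac hD hlam1 hlam2 hα hαβ hM hb
    clear_value x y b
    have hsq : ‖z‖ ^ 2 ≤ θ 0 := by
      rw [Complex.sq_norm, Complex.normSq_apply, ← hx, ← hy]
      rcases mul_eq_zero.mp (show y * (2 * x + b) = 0 by linarith) with hy0 | hx0
      · have hq : (x + b / 2) ^ 2 = b ^ 2 / 4 - θ 0 := by
          linear_combination hre + y * hy0
        have h0 : (x + b / 2) ^ 2 = 0 := le_antisymm (by linarith) (sq_nonneg _)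
        have hx2 : x + b / 2 = 0 := by
          exact pow_eq_zero_iff two_ne_zero |>.mp h0
        nlinarith [hx2, hy0, hdisc]
      · have hxv : x = -(b / 2) := by linarith
        rw [hxv] at hre ⊢
        ring_nf at hre ⊢
        linarith
    rw [hθ0g] at hsq
    nlinarith [norm_nonneg z, hγ0, hsq]
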